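/- Let Q be the bilinear form on ℤ² given by Q((a,b),(c,d)) = −ac − ad − bd (matrix (−1,−1;0,−1)). Then the only primitive vectors v = (a,b) with b ≥ 0, satisfying Q(v₊,v₋) ≥ 0 for the canonical decomposition v = v₋ + v₊ (with v₋ × v = v × v₊ = v₋ × v₊ = 1 and |v₊|,|v₋|<|v|), are v = (1,1), (−1,1), (−2,1), (−1,2), all of which satisfy Q(v,v) ≥ −3. -/

import Mathlib

/-- Cross product on ℤ²: (a,b) × (c,d) = ad − bc. -/
def cross (v w : ℤ × ℤ) : ℤ := v.1 * w.2 - v.2 * w.1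

/-- Euclidean norm of a vector in ℤ². -/
noncomputable def euclNormZ2 (v : ℤ × ℤ) : ℝ := Real.sqrt ((v.1 : ℝ) ^ 2 + (v.2 : ℝ) ^ 2)

/-- A vector of ℤ² is primitive if its coordinates are coprime. -/
def IsPrimitive (v : ℤ × ℤ) : Prop := Int.gcd v.1 v.2 = 1

/-- The bilinear form with matrix `(−1, −1; 0, −1)`: `Q((a,b),(c,d)) = −ac − ad − bd`. -/
def QIminus (v w : ℤ × ℤ) : ℤ := -(v.1 * w.1) - v.1 * w.2 - v.2 * w.2

/-- For the form `I₋` (with `n = 1`): the only primitive vectors `v = (a,b)` with `b ≥ 0` and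
`|v| > 1` whose canonical decomposition `v = v₋ + v₊` (with `v₋ × v = v × v₊ = v₋ × v₊ = 1`
and `|v₊|, |v₋| < |v|`) satisfies `Q(v₊, v₋) ≥ 0` are `(1,1)`, `(−1,1)`, `(−2,1)`, `(−1,2)`,
and all of these satisfy `Q(v,v) ≥ −3`. -/
lemma enorm_lt_int {x y : ℤ × ℤ} (h : euclNormZ2 x < euclNormZ2 y) :
    x.1 ^ 2 + x.2 ^ 2 < y.1 ^ 2 + y.2 ^ 2 := by
  by_contra hc
  push_neg at hc
  have : euclNormZ2 y ≤ euclNormZ2 x := by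
    apply Real.sqrt_le_sqrt
    exact_mod_cast hc
  exact absurd h (not_lt.2 this)

lemma enorm_gt_one_int {x : ℤ × ℤ} (h : 1 < euclNormZ2 x) : 1 < x.1 ^ 2 + x.2 ^ 2 := by
  by_contra hc
  push_neg at hc
  have h1 : ((x.1 : ℝ) ^ 2 + (x.2 : ℝ) ^ 2) ≤ 1 := by exact_mod_cast hc
  have : euclNormZ2 x ≤ 1 := by
    rw [show (1:ℝ) = Real.sqrt 1 by simp]
    exact Real.sqrt_le_sqrt h1
  exact absurd h (not_lt.2 this)

lemma Nform_pos (c d : ℤ) (hne : ¬(c = 0 ∧ d = 0)) : 1 ≤ c ^ 2 + c * d + d ^ 2 := by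
  have h3 : 3 ≤ 4 * (c ^ 2 + c * d + d ^ 2) ∨ 4 ≤ 4 * (c ^ 2 + c * d + d ^ 2) := by
    rcases eq_or_ne d 0 with rfl | hd
    · have hc : c ≠ 0 := fun h => hne ⟨h, rfl⟩
      right
      have h1 : 1 ≤ |c| := Int.one_le_abs hc
      nlinarith [sq_abs c, sq_nonneg c]
    · left
      have h1 : 1 ≤ |d| := Int.one_le_abs hd
      nlinarith [sq_abs d, sq_nonneg (2 * c + d)]
  have h4 : 3 ≤ 4 * (c ^ 2 + c * d + d ^ 2) := by omega
  generalize hN : c ^ 2 + c * d + d ^ 2 = N at h4 ⊢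
  omega

lemma key_bound (c d e f : ℤ) (h : c * f - d * e = 1)
    (h4 : e ^ 2 + f ^ 2 < (c + e) ^ 2 + (d + f) ^ 2)
    (h5 : c ^ 2 + d ^ 2 < (c + e) ^ 2 + (d + f) ^ 2)
    (hQ : c * e + d * e + d * f ≤ 0) :
    (c + e) ^ 2 + (c + e) * (d + f) + (d + f) ^ 2 ≤ 3 := by
  rcases eq_or_lt_of_le hQ with h0 | h1
  · -- q = 0 case
    have hNu : 1 ≤ c ^ 2 + c * d + d ^ 2 := by
      apply Nform_pos
      rintro ⟨rfl, rfl⟩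
      simp at h
    have hNw : 1 ≤ e ^ 2 + e * f + f ^ 2 := by
      apply Nform_pos
      rintro ⟨rfl, rfl⟩
      simp at h
    have hid : (c ^ 2 + c * d + d ^ 2) * (e ^ 2 + e * f + f ^ 2) = 1 := by
      have : 4 * ((c ^ 2 + c * d + d ^ 2) * (e ^ 2 + e * f + f ^ 2)) = 4 := by
        linear_combination 4 * (c * f - d * e + 1) * h
          + (8 * (c * e + c * f + d * f) - 4 * (c * f - d * e + c * e + d * e + d * f)) * h0
      linarith
    have hmul : 0 ≤ (c ^ 2 + c * d + d ^ 2 - 1) * (e ^ 2 + e * f + f ^ 2 - 1) :=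
      mul_nonneg (by linarith) (by linarith)
    -- Nu + Nw ≤ 2 hence Nu = Nw = 1
    have hsum2 : c ^ 2 + c * d + d ^ 2 + (e ^ 2 + e * f + f ^ 2) ≤ 2 := by nlinarith [hmul, hid]
    -- goal = Nu + Nw + (2ce+cf+de+2df) and 2ce+cf+de+2df = 1
    have hB : 2 * (c * e) + c * f + d * e + 2 * (d * f) = 1 := by linarith [h, h0]
    nlinarith [hsum2, hB]
  · -- q ≥ 1, i.e. c*e+d*e+d*f ≤ -1
    have hq1 : c * e + d * e + d * f ≤ -1 := by omega
    rcases le_or_gt (c * e + d * f) 0 with hI | hI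
    · -- I ≤ 0
      have hexpA : (c + e) ^ 2 + (d + f) ^ 2
          = c ^ 2 + d ^ 2 + (e ^ 2 + f ^ 2) + 2 * (c * e + d * f) := by ring
      have hA : 1 ≤ c ^ 2 + d ^ 2 + 2 * (c * e + d * f) := by linarith
      have hC : 1 ≤ e ^ 2 + f ^ 2 + 2 * (c * e + d * f) := by linarith
      have hAC : (c ^ 2 + d ^ 2) * (e ^ 2 + f ^ 2) = (c * e + d * f) ^ 2 + 1 := by
        linear_combination (c * f - d * e + 1) * h
      have hI0 : 0 ≤ c * e + d * f := by
        by_contra hI0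
        push_neg at hI0
        have hIm : c * e + d * f ≤ -1 := by omega
        nlinarith [mul_nonneg (by linarith : (0:ℤ) ≤ c ^ 2 + d ^ 2 + 2 * (c * e + d * f) - 1)
          (by linarith : (0:ℤ) ≤ e ^ 2 + f ^ 2 + 2 * (c * e + d * f) - 1),
          mul_nonneg (by linarith : (0:ℤ) ≤ 1 - 2 * (c * e + d * f))
            (by linarith : (0:ℤ) ≤ c ^ 2 + d ^ 2 + (e ^ 2 + f ^ 2) - 2 + 4 * (c * e + d * f)),
          mul_nonneg (by linarith : (0:ℤ) ≤ -(c * e + d * f) - 1)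
            (by linarith : (0:ℤ) ≤ -(c * e + d * f)), hAC]
      have hIe : c * e + d * f = 0 := le_antisymm hI hI0
      have hA1 : 1 ≤ c ^ 2 + d ^ 2 := by linarith [hIe, hA]
      have hC1 : 1 ≤ e ^ 2 + f ^ 2 := by linarith [hIe, hC]
      have hACe : (c ^ 2 + d ^ 2) * (e ^ 2 + f ^ 2) = 1 := by rw [hAC, hIe]; ring
      have hs : c ^ 2 + d ^ 2 + (e ^ 2 + f ^ 2) ≤ 2 := by
        nlinarith [mul_nonneg (by linarith : (0:ℤ) ≤ c ^ 2 + d ^ 2 - 1)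
          (by linarith : (0:ℤ) ≤ e ^ 2 + f ^ 2 - 1), hACe]
      nlinarith [sq_nonneg (c + e - d - f), hs, hIe, hA1, hC1]
    · -- I ≥ 1 : contradiction
      exfalso
      have hst : (c * e) * (d * f) = (d * e) * (d * e + 1) := by
        linear_combination (d * e) * h
      have hmul : 0 ≤ (c * e + d * f - d * e) * (-(d * e + c * e + d * f + 1)) :=
        mul_nonneg (by linarith) (by linarith)
      nlinarith [hst, hmul, sq_nonneg (c * e - d * f), hI, hq1]

theorem Iminus_exceptional_vectors (v vm vp : ℤ × ℤ) (hprim : IsPrimitive v)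
    (hb : 0 ≤ v.2) (hnorm : 1 < euclNormZ2 v)
    (h1 : cross vm v = 1) (h2 : cross v vp = 1) (h3 : cross vm vp = 1)
    (hsum : v = vm + vp)
    (h4 : euclNormZ2 vp < euclNormZ2 v) (h5 : euclNormZ2 vm < euclNormZ2 v)
    (hQ : 0 ≤ QIminus vp vm) :
    (v = (1, 1) ∨ v = (-1, 1) ∨ v = (-2, 1) ∨ v = (-1, 2)) ∧ -3 ≤ QIminus v v := by
  have h4' := enorm_lt_int h4
  have h5' := enorm_lt_int h5
  have hV := enorm_gt_one_int hnorm
  clear h4 h5 hnorm hprim h1 h2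
  obtain ⟨a, b⟩ := v
  obtain ⟨c, d⟩ := vm
  obtain ⟨e, f⟩ := vp
  simp only [cross, QIminus, Prod.mk_add_mk, Prod.mk.injEq] at *
  obtain ⟨rfl, rfl⟩ := hsum
  have hkey : (c + e) ^ 2 + (c + e) * (d + f) + (d + f) ^ 2 ≤ 3 :=
    key_bound c d e f h3 h4' h5' (by linarith)
  have hsq : (2 * (c + e) + (d + f)) ^ 2 + 3 * (d + f) ^ 2 ≤ 12 := by nlinarith [hkey]
  have hb2 : d + f ≤ 2 := by nlinarith [hsq, sq_nonneg (2 * (c + e) + (d + f))]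
  have ha1 : c + e ≤ 1 := by
    by_contra hcon
    push_neg at hcon
    have hx : 4 ≤ 2 * (c + e) + (d + f) := by linarith
    have hp : 0 ≤ (2 * (c + e) + (d + f) - 4) * (2 * (c + e) + (d + f)) :=
      mul_nonneg (by linarith) (by linarith)
    nlinarith [hsq, sq_nonneg (d + f), hp, hx]
  have ha2 : -2 ≤ c + e := by
    by_contra hcon
    push_neg at hcon
    have hx : 2 * (c + e) + (d + f) ≤ -4 := by linarith
    have hp : 0 ≤ (-(2 * (c + e) + (d + f)) - 4) * (-(2 * (c + e) + (d + f))) :=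
      mul_nonneg (by linarith) (by linarith)
    nlinarith [hsq, sq_nonneg (d + f), hp, hx]
  have hk' : (c + e) * (c + e) + (c + e) * (d + f) + (d + f) * (d + f) ≤ 3 := by
    nlinarith [hkey]
  have hV' : 2 ≤ (c + e) * (c + e) + (d + f) * (d + f) := by nlinarith [hV]
  set a := c + e with hadef
  set b := d + f with hbdef
  clear_value a b
  clear hkey hsq hV h3 h4' h5' hQ
  refine ⟨?_, by linarith [hk']⟩
  rcases (by omega : a = -2 ∨ a = -1 ∨ a = 0 ∨ a = 1) with rfl | rfl | rfl | rfl <;>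
    rcases (by omega : b = 0 ∨ b = 1 ∨ b = 2) with rfl | rfl | rfl <;> omega
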